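/- The rational map x₁ = −882000(x−14)/(x³+420x−5600), y₁ = 49000·y·(x³−21x²−140)/(x³+420x−5600)² sends points of the genus-2 curve C: y² = (x³+420x−5600)(x³+42x²+1120) to points of the elliptic curve E: y₁² = x₁³ + 4900x₁² + 7031500x₁ + 2401000000; that is, whenever y² = (x³+420x−5600)(x³+42x²+1120) and x³+420x−5600 ≠ 0, the identity y₁² = x₁³ + 4900x₁² + 7031500x₁ + 2401000000 holds. -/

import Mathlib

/-- The rational map `x₁ = −882000(x−14)/(x³+420x−5600)`,
`y₁ = 49000·y·(x³−21x²−140)/(x³+420x−5600)²` sends points of the genus-2 curve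
`C : y² = (x³+420x−5600)(x³+42x²+1120)` to points of the elliptic curve
`E : y₁² = x₁³ + 4900x₁² + 7031500x₁ + 2401000000`. -/
theorem degree_three_map_to_elliptic_curve (x y : ℚ)
    (hC : y^2 = (x^3 + 420*x - 5600) * (x^3 + 42*x^2 + 1120))
    (hden : x^3 + 420*x - 5600 ≠ 0) :
    let x₁ : ℚ := -882000*(x - 14) / (x^3 + 420*x - 5600)
    let y₁ : ℚ := 49000*y*(x^3 - 21*x^2 - 140) / (x^3 + 420*x - 5600)^2
    y₁^2 = x₁^3 + 4900*x₁^2 + 7031500*x₁ + 2401000000 := by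
  intro x₁ y₁
  simp only [x₁, y₁]
  have hden' : x * (x ^ 2 + 420) - 5600 ≠ 0 := by ring_nf at hden ⊢; exact hden
  field_simp
  linear_combination (49000*(x^3 - 21*x^2 - 140))^2 * hC
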